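/- Let X be the simplex in ℝ^A, let V : X → ℝ^A be bounded, and let x : [0,∞) → X be continuous with x(t) = x(0) + ∫₀ᵗ V(x(s)) ds for all t ≥ 0 (the integrand being locally integrable). Write Γ₊ = {x(t) : t ≥ 0} and RP = {y ∈ X : V(y) = 0}, and assume RP is closed. Suppose there exist L : X → ℝ and φ : X → [0,∞) such that: (i) L is continuously differentiable on an open set containing Γ₊ and continuous on X; (ii) φ is lower semicontinuous and φ(y) = 0 if and only if y ∈ RP; (iii) ∇L(y)·V(y) ≥ φ(y) for all y ∈ Γ₊. Then dist(x(t), RP) → 0 as t → ∞. -/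

import Mathlib

open Matrix Filter

noncomputable section

set_option maxHeartbeats 1000000

/-- Lyapunov convergence for (possibly discontinuous) dynamics on the simplex.
If `x(t) = x(0) + ∫₀ᵗ V(x(s)) ds` stays in the simplex, `V` is bounded, `RP = {V = 0}` is
closed, `L` is `C¹` on an open set containing the trajectory and continuous on the simplex,
`φ ≥ 0` is lower semicontinuous with `φ = 0` exactly on `RP`, and `∇L·V ≥ φ` along the
trajectory, then `dist(x(t), RP) → 0`. -/
theorem stmt_2 {A : Type*} [Fintype A] [Nonempty A]
    (V : (A → ℝ) → (A → ℝ)) (hVbdd : ∃ B : ℝ, ∀ y ∈ stdSimplex ℝ A, ‖V y‖ ≤ B)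
    (x : ℝ → (A → ℝ)) (hxX : ∀ t : ℝ, 0 ≤ t → x t ∈ stdSimplex ℝ A)
    (hxcont : ContinuousOn x (Set.Ici 0))
    (hloc : ∀ t : ℝ, 0 ≤ t → IntervalIntegrable (fun s => V (x s)) MeasureTheory.volume 0 t)
    (hsol : ∀ t : ℝ, 0 ≤ t → x t = x 0 + ∫ s in (0:ℝ)..t, V (x s))
    (hRPclosed : IsClosed {y ∈ stdSimplex ℝ A | V y = 0})
    (L : (A → ℝ) → ℝ) (φ : (A → ℝ) → ℝ)
    (hφnn : ∀ y ∈ stdSimplex ℝ A, 0 ≤ φ y)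
    (U : Set (A → ℝ)) (hU : IsOpen U) (hΓU : x '' Set.Ici 0 ⊆ U)
    (L' : (A → ℝ) → ((A → ℝ) →L[ℝ] ℝ))
    (hL' : ∀ y ∈ U, HasFDerivAt L (L' y) y)
    (hL'cont : ContinuousOn L' U)
    (hLcont : ContinuousOn L (stdSimplex ℝ A))
    (hφlsc : LowerSemicontinuousOn φ (stdSimplex ℝ A))
    (hφzero : ∀ y ∈ stdSimplex ℝ A, (φ y = 0 ↔ V y = 0))
    (hLyap : ∀ y ∈ x '' Set.Ici 0, φ y ≤ L' y (V y)) :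
    Tendsto (fun t => Metric.infDist (x t) {y ∈ stdSimplex ℝ A | V y = 0})
      atTop (nhds 0) := by
  classical
  set RP : Set (A → ℝ) := {y ∈ stdSimplex ℝ A | V y = 0} with hRPdef
  obtain ⟨B, hB⟩ := hVbdd
  have hx0 : x 0 ∈ stdSimplex ℝ A := hxX 0 le_rfl
  have hB0 : (0:ℝ) ≤ B := le_trans (norm_nonneg _) (hB _ hx0)
  have hxU : ∀ t : ℝ, 0 ≤ t → x t ∈ U := fun t ht => hΓU ⟨t, ht, rfl⟩
  set ψ : ℝ → ℝ := fun s => L' (x s) (V (x s)) with hψdef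
  set g : ℝ → ℝ := fun t => L (x t) with hgdef
  -- interval integrability of V ∘ x on subintervals of [0, ∞)
  have hVI : ∀ a b : ℝ, 0 ≤ a → a ≤ b →
      IntervalIntegrable (fun s => V (x s)) MeasureTheory.volume a b := by
    intro a b ha hab
    refine (hloc b (ha.trans hab)).mono_set ?_
    rw [Set.uIcc_of_le hab, Set.uIcc_of_le (ha.trans hab)]
    exact Set.Icc_subset_Icc ha le_rfl
  -- increments of x
  have hΔ : ∀ a b : ℝ, 0 ≤ a → a ≤ b → x b - x a = ∫ s in a..b, V (x s) := by
    intro a b ha hab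
    have hb : 0 ≤ b := ha.trans hab
    rw [hsol b hb, hsol a ha, add_sub_add_left_eq_sub]
    exact intervalIntegral.integral_interval_sub_left (hloc b hb) (hloc a ha)
  -- Lipschitz estimate for x
  have hLip : ∀ a b : ℝ, 0 ≤ a → a ≤ b → ‖x b - x a‖ ≤ B * (b - a) := by
    intro a b ha hab
    rw [hΔ a b ha hab]
    have h := intervalIntegral.norm_integral_le_of_norm_le_const
      (C := B) (f := fun s => V (x s)) (a := a) (b := b) ?_
    · rwa [abs_of_nonneg (sub_nonneg.2 hab)] at h
    · intro s hs
      rw [Set.uIoc_of_le hab] at hs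
      exact hB _ (hxX s (ha.trans hs.1.le))
  -- measurability of ψ on subintervals
  have hψmeas : ∀ a b : ℝ, 0 ≤ a → a ≤ b →
      MeasureTheory.AEStronglyMeasurable ψ (MeasureTheory.volume.restrict (Set.Ioc a b)) := by
    intro a b ha hab
    have h1 : MeasureTheory.AEStronglyMeasurable (fun s => V (x s))
        (MeasureTheory.volume.restrict (Set.Ioc a b)) := by
      have h := (hloc b (ha.trans hab)).1
      exact (h.mono_set (Set.Ioc_subset_Ioc ha le_rfl)).aestronglyMeasurable
    have h2 : MeasureTheory.AEStronglyMeasurable (fun s => L' (x s))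
        (MeasureTheory.volume.restrict (Set.Ioc a b)) := by
      have hc : ContinuousOn (fun s => L' (x s)) (Set.Icc a b) :=
        hL'cont.comp (hxcont.mono (fun s hs => ha.trans hs.1))
          (fun s hs => hxU s (ha.trans hs.1))
      exact (hc.aestronglyMeasurable measurableSet_Icc).mono_measure
        (MeasureTheory.Measure.restrict_mono Set.Ioc_subset_Icc_self le_rfl)
    have := (ContinuousLinearMap.apply ℝ ℝ :
      (A → ℝ) →L[ℝ] ((A → ℝ) →L[ℝ] ℝ) →L[ℝ] ℝ).aestronglyMeasurable_comp₂ h1 h2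
    simpa using this
  -- interval integrability of ψ
  have hψIcc : ∀ a b : ℝ, 0 ≤ a → a ≤ b →
      MeasureTheory.IntegrableOn ψ (Set.Icc a b) MeasureTheory.volume := by
    intro a b ha hab
    have hKU : x '' Set.Icc a b ⊆ U := fun y ⟨s, hs, hy⟩ => hy ▸ hxU s (ha.trans hs.1)
    have hKc : IsCompact (x '' Set.Icc a b) :=
      isCompact_Icc.image_of_continuousOn (hxcont.mono (fun s hs => ha.trans hs.1))
    obtain ⟨y₀, hy₀K, hy₀max⟩ := hKc.exists_isMaxOn
      ⟨x a, Set.mem_image_of_mem x (Set.left_mem_Icc.2 hab)⟩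
      (continuous_norm.comp_continuousOn (hL'cont.mono hKU))
    rw [integrableOn_Icc_iff_integrableOn_Ioc]
    refine MeasureTheory.Integrable.mono' (g := fun _ => ‖L' y₀‖ * B)
      ((MeasureTheory.integrableOn_const_iff (C := ‖L' y₀‖ * B)).2 (Or.inr measure_Ioc_lt_top))
      (hψmeas a b ha hab) ?_
    filter_upwards [MeasureTheory.ae_restrict_mem measurableSet_Ioc] with s hs
    have hs0 : 0 ≤ s := ha.trans hs.1.le
    calc ‖ψ s‖ ≤ ‖L' (x s)‖ * ‖V (x s)‖ := (L' (x s)).le_opNorm _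
      _ ≤ ‖L' y₀‖ * B := by
          refine mul_le_mul (hy₀max (Set.mem_image_of_mem x ⟨hs.1.le, hs.2⟩))
            (hB _ (hxX s hs0)) (norm_nonneg _) (norm_nonneg _)
  have hψint : ∀ a b : ℝ, 0 ≤ a → a ≤ b →
      IntervalIntegrable ψ MeasureTheory.volume a b := by
    intro a b ha hab
    rw [intervalIntegrable_iff_integrableOn_Ioc_of_le hab]
    exact (hψIcc a b ha hab).mono_set Set.Ioc_subset_Icc_self
  -- Key FTC-type inequality
  have key : ∀ a b : ℝ, 0 ≤ a → a ≤ b → (∫ s in a..b, ψ s) ≤ g b - g a := by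
    intro a b ha hab
    refine le_of_forall_pos_le_add fun ε' hε' => ?_
    have hDpos : (0:ℝ) < (2*B+1) * (b - a) + 1 := by nlinarith [sub_nonneg.2 hab]
    set ε : ℝ := ε' / ((2*B+1) * (b - a) + 1) with hεdef
    have hεpos : 0 < ε := div_pos hε' hDpos
    have main : Set.Icc a b ⊆ {t | (∫ s in a..t, ψ s) ≤ g t - g a + ε * (2*B+1) * (t - a)} := by
      apply IsClosed.Icc_subset_of_forall_exists_gt
      · -- closedness
        have hcont1 : ContinuousOn (fun t => ∫ s in a..t, ψ s) (Set.Icc a b) := by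
          have h := intervalIntegral.continuousOn_primitive_interval
            (μ := MeasureTheory.volume) (f := ψ) (a := a) (b := b)
            (by rw [Set.uIcc_of_le hab]; exact hψIcc a b ha hab)
          rwa [Set.uIcc_of_le hab] at h
        have hcont2 : ContinuousOn (fun t => g t - g a + ε * (2*B+1) * (t - a)) (Set.Icc a b) := by
          refine ContinuousOn.add (ContinuousOn.sub ?_ continuousOn_const)
            ((continuous_const.mul (continuous_id.sub continuous_const)).continuousOn)
          exact hLcont.comp (hxcont.mono (fun s hs => ha.trans hs.1))
            (fun s hs => hxX s (ha.trans hs.1))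
        have heq : {t | (∫ s in a..t, ψ s) ≤ g t - g a + ε * (2*B+1) * (t - a)} ∩ Set.Icc a b
            = Set.Icc a b ∩ (fun t => ((∫ s in a..t, ψ s),
                g t - g a + ε * (2*B+1) * (t - a))) ⁻¹' {p : ℝ × ℝ | p.1 ≤ p.2} := by
          ext t
          simp only [Set.mem_inter_iff, Set.mem_setOf_eq, Set.mem_preimage, and_comm]
        rw [heq]
        exact (hcont1.prodMk hcont2).preimage_isClosed_of_isClosed isClosed_Icc isClosed_le_prod
      · -- a belongs
        simp only [Set.mem_setOf_eq, intervalIntegral.integral_same, sub_self, mul_zero]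
        norm_num
      · -- the induction step
        rintro t ⟨htS, htI⟩ v hv
        have ht0 : 0 ≤ t := ha.trans htI.1
        have hxtU : x t ∈ U := hxU t ht0
        have hsmall : ∀ᶠ y in nhds (x t),
            ‖L y - L (x t) - L' (x t) (y - x t)‖ ≤ ε * ‖y - x t‖ :=
          Asymptotics.isLittleO_iff.1 (hL' (x t) hxtU).isLittleO hεpos
        obtain ⟨ν, hν, hν'⟩ := Metric.eventually_nhds_iff.1 hsmall
        have hL'x : ContinuousOn (fun s => L' (x s)) (Set.Ici 0) :=
          hL'cont.comp hxcont (fun s hs => hxU s hs)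
        obtain ⟨η, hη, hη'⟩ := Metric.continuousWithinAt_iff.1 (hL'x t ht0) ε hεpos
        obtain ⟨θ, hθ, hθ'⟩ := Metric.continuousWithinAt_iff.1 (hxcont t ht0) ν hν
        set u : ℝ := min v (min b (t + min η θ / 2)) with hudef
        have hmin2 : 0 < min η θ / 2 := by positivity
        have htu : t < u := lt_min hv (lt_min htI.2 (by linarith))
        have hub : u ≤ b := le_trans (min_le_right _ _) (min_le_left _ _)
        have hut : u ≤ t + min η θ / 2 := le_trans (min_le_right _ _) (min_le_right _ _)
        have hdu : ∀ s ∈ Set.Icc t u, dist s t < min η θ := by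
          intro s hs
          rw [Real.dist_eq, abs_of_nonneg (sub_nonneg.2 hs.1)]
          have h1 : s ≤ t + min η θ / 2 := le_trans hs.2 hut
          have h2 : 0 < min η θ := lt_min hη hθ
          linarith
        -- pointwise bound on [t, u]
        have hpt : ∀ s ∈ Set.Icc t u, ψ s ≤ L' (x t) (V (x s)) + ε * B := by
          intro s hs
          have hs0 : 0 ≤ s := ht0.trans hs.1
          have hclose : ‖L' (x s) - L' (x t)‖ < ε := by
            have := hη' hs0 (lt_of_lt_of_le (hdu s hs) (min_le_left _ _))
            rwa [dist_eq_norm] at this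
          have heq2 : ψ s = L' (x t) (V (x s)) + (L' (x s) - L' (x t)) (V (x s)) := by
            simp [hψdef, ContinuousLinearMap.sub_apply]
          rw [heq2]
          have h3 : (L' (x s) - L' (x t)) (V (x s)) ≤ ε * B := by
            have h4 : (L' (x s) - L' (x t)) (V (x s)) ≤ ‖(L' (x s) - L' (x t)) (V (x s))‖ := by
              rw [Real.norm_eq_abs]; exact le_abs_self _
            have h5 := (L' (x s) - L' (x t)).le_opNorm (V (x s))
            have h6 := mul_le_mul hclose.le (hB _ (hxX s hs0)) (norm_nonneg _) hεpos.le
            linarith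
          linarith
        -- integrability pieces
        have hint1 : IntervalIntegrable ψ MeasureTheory.volume t u := hψint t u ht0 htu.le
        have hintV : IntervalIntegrable (fun s => L' (x t) (V (x s)))
            MeasureTheory.volume t u :=
          ⟨(L' (x t)).integrable_comp (hVI t u ht0 htu.le).1,
           (L' (x t)).integrable_comp (hVI t u ht0 htu.le).2⟩
        have hint2 : IntervalIntegrable (fun s => L' (x t) (V (x s)) + ε * B)
            MeasureTheory.volume t u := hintV.add intervalIntegrable_const
        have hI : (∫ s in t..u, ψ s) ≤ ∫ s in t..u, (L' (x t) (V (x s)) + ε * B) :=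
          intervalIntegral.integral_mono_on htu.le hint1 hint2 hpt
        have hI2 : (∫ s in t..u, (L' (x t) (V (x s)) + ε * B))
            = L' (x t) (x u - x t) + ε * B * (u - t) := by
          rw [intervalIntegral.integral_add hintV intervalIntegrable_const,
            (L' (x t)).intervalIntegral_comp_comm (hVI t u ht0 htu.le),
            ← hΔ t u ht0 htu.le, intervalIntegral.integral_const, smul_eq_mul]
          ring
        have hxut : ‖x u - x t‖ ≤ B * (u - t) := hLip t u ht0 htu.le
        have hdist : dist (x u) (x t) < ν := by
          refine hθ' (ht0.trans htu.le) ?_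
          exact lt_of_lt_of_le (hdu u ⟨htu.le, le_rfl⟩) (min_le_right _ _)
        have hfd : ‖L (x u) - L (x t) - L' (x t) (x u - x t)‖ ≤ ε * ‖x u - x t‖ := hν' hdist
        have hfd2 : L' (x t) (x u - x t) ≤ g u - g t + ε * ‖x u - x t‖ := by
          rw [Real.norm_eq_abs] at hfd
          have := (abs_le.1 hfd).1
          simp only [hgdef]
          linarith
        have hεx : ε * ‖x u - x t‖ ≤ ε * (B * (u - t)) :=
          mul_le_mul_of_nonneg_left hxut hεpos.le
        have hIu : (∫ s in t..u, ψ s) ≤ g u - g t + ε * (2*B+1) * (u - t) := by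
          have hut0 : 0 ≤ u - t := sub_nonneg.2 htu.le
          nlinarith [hεpos.le]
        have hsplit : (∫ s in a..u, ψ s) = (∫ s in a..t, ψ s) + ∫ s in t..u, ψ s :=
          (intervalIntegral.integral_add_adjacent_intervals
            (hψint a t ha htI.1) (hψint t u ht0 htu.le)).symm
        refine ⟨u, ?_, htu, min_le_left _ _⟩
        simp only [Set.mem_setOf_eq] at htS ⊢
        rw [hsplit]
        nlinarith [hεpos.le, hB0]
    have hb := main (Set.right_mem_Icc.2 hab)
    simp only [Set.mem_setOf_eq] at hb
    have hεfinal : ε * (2*B+1) * (b - a) ≤ ε' := by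
      rw [hεdef, div_mul_eq_mul_div, div_mul_eq_mul_div, div_le_iff₀ hDpos]
      nlinarith [sub_nonneg.2 hab, hε'.le]
    linarith
  -- nonnegativity of ψ on [0, ∞)
  have hψnn : ∀ s : ℝ, 0 ≤ s → 0 ≤ ψ s := fun s hs =>
    le_trans (hφnn _ (hxX s hs)) (hLyap _ ⟨s, hs, rfl⟩)
  -- uniform bound for the primitive
  obtain ⟨yM, hyM, hyMmax⟩ := (isCompact_stdSimplex ℝ A).exists_isMaxOn ⟨x 0, hx0⟩ hLcont
  set Cb : ℝ := L yM - g 0 with hCbdef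
  have hGbd : ∀ T : ℝ, 0 ≤ T → (∫ s in (0:ℝ)..T, ψ s) ≤ Cb := by
    intro T hT
    refine le_trans (key 0 T le_rfl hT) ?_
    rw [hCbdef]
    exact sub_le_sub_right (hyMmax (hxX T hT)) (g 0)
  -- main contradiction argument
  by_contra hcon
  rcases Set.eq_empty_or_nonempty RP with hRPe | hRPne
  · exact hcon (by simpa [← hRPdef, hRPe, Metric.infDist_empty] using
      (tendsto_const_nhds : Tendsto (fun _ : ℝ => (0:ℝ)) atTop (nhds 0)))
  rw [Metric.tendsto_atTop] at hcon
  push_neg at hcon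
  obtain ⟨ε, hεpos, hε⟩ := hcon
  have hε' : ∀ N : ℝ, ∃ t, (N ≤ t ∧ 0 ≤ t) ∧ ε ≤ Metric.infDist (x t) RP := by
    intro N
    obtain ⟨t, ht1, ht2⟩ := hε (max N 0)
    refine ⟨t, ⟨le_trans (le_max_left _ _) ht1, le_trans (le_max_right _ _) ht1⟩, ?_⟩
    rwa [Real.dist_eq, sub_zero, abs_of_nonneg Metric.infDist_nonneg] at ht2
  -- compact set away from RP and a positive lower bound for φ on it
  set K : Set (A → ℝ) := {y ∈ stdSimplex ℝ A | ε/2 ≤ Metric.infDist y RP} with hKdef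
  have hKclosed : IsClosed K :=
    ((isCompact_stdSimplex ℝ A).isClosed).inter
      (isClosed_le continuous_const (Metric.continuous_infDist_pt RP))
  have hKcomp : IsCompact K :=
    (isCompact_stdSimplex ℝ A).inter_right
      (isClosed_le continuous_const (Metric.continuous_infDist_pt RP))
  have hδex : ∃ δ : ℝ, 0 < δ ∧ ∀ y ∈ K, δ ≤ φ y := by
    by_contra hno
    push_neg at hno
    set F : ℕ → Set (A → ℝ) := fun n => {y ∈ K | φ y ≤ 1 / ((n:ℝ) + 1)} with hFdef
    have hFne : ∀ n, (F n).Nonempty := by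
      intro n
      obtain ⟨y, hyK, hy⟩ := hno (1 / ((n:ℝ)+1)) (by positivity)
      exact ⟨y, hyK, hy.le⟩
    have hFclosed : ∀ n, IsClosed (F n) := by
      intro n
      apply isClosed_of_closure_subset
      intro z hz
      have hzK : z ∈ K := hKclosed.closure_subset
        (closure_mono (fun y (hy : y ∈ F n) => hy.1) hz)
      refine ⟨hzK, ?_⟩
      by_contra hgt
      push_neg at hgt
      have hev := hφlsc z hzK.1 _ hgt
      have hFsub : F n ⊆ stdSimplex ℝ A := fun y hy => hy.1.1
      have hne : (nhdsWithin z (F n)).NeBot := mem_closure_iff_nhdsWithin_neBot.1 hz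
      have hev2 : ∀ᶠ y in nhdsWithin z (F n), 1 / ((n:ℝ)+1) < φ y :=
        hev.filter_mono (nhdsWithin_mono z hFsub)
      have hev3 : ∀ᶠ y in nhdsWithin z (F n), φ y ≤ 1 / ((n:ℝ)+1) :=
        eventually_mem_nhdsWithin.mono (fun y hy => hy.2)
      obtain ⟨y, h1, h2⟩ := (hev2.and hev3).exists
      linarith
    have hFcomp : ∀ n, IsCompact (F n) := fun n =>
      hKcomp.of_isClosed_subset (hFclosed n) (fun y hy => hy.1)
    have hdir : Directed (· ⊇ ·) F := by
      have hmono : ∀ k l : ℕ, k ≤ l → F l ⊆ F k := by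
        intro k l hkl y hy
        refine ⟨hy.1, le_trans hy.2 (one_div_le_one_div_of_le (by positivity) ?_)⟩
        exact_mod_cast Nat.succ_le_succ hkl
      exact fun m n => ⟨max m n, hmono m _ (le_max_left m n), hmono n _ (le_max_right m n)⟩
    obtain ⟨z, hz⟩ := IsCompact.nonempty_iInter_of_directed_nonempty_isCompact_isClosed
      F hdir hFne hFcomp hFclosed
    simp only [Set.mem_iInter] at hz
    have hzK : z ∈ K := (hz 0).1
    have hφz : φ z ≤ 0 := by
      by_contra h
      push_neg at h
      obtain ⟨n, hn⟩ := exists_nat_one_div_lt h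
      have := (hz n).2
      linarith
    have hφz0 : φ z = 0 := le_antisymm hφz (hφnn z hzK.1)
    have hzRP : z ∈ RP := ⟨hzK.1, (hφzero z hzK.1).1 hφz0⟩
    have h0 : Metric.infDist z RP = 0 := Metric.infDist_zero_of_mem hzRP
    have := hzK.2
    linarith
  obtain ⟨δ, hδpos, hδK⟩ := hδex
  set r : ℝ := ε / (2 * (B + 1)) with hrdef
  have hrpos : 0 < r := div_pos hεpos (by linarith)
  have hBr : (B + 1) * r = ε / 2 := by
    rw [hrdef]
    field_simp
  -- integral lower bound on each excursion
  have hstep : ∀ t₀ : ℝ, 0 ≤ t₀ → ε ≤ Metric.infDist (x t₀) RP →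
      δ * r ≤ ∫ s in t₀..(t₀ + r), ψ s := by
    intro t₀ ht₀ hinf
    have hpt : ∀ s ∈ Set.Icc t₀ (t₀ + r), δ ≤ ψ s := by
      intro s hs
      have hs0 : 0 ≤ s := ht₀.trans hs.1
      have hd : ‖x s - x t₀‖ ≤ ε/2 := by
        have h1 := hLip t₀ s ht₀ hs.1
        have h2 : B * (s - t₀) ≤ B * r :=
          mul_le_mul_of_nonneg_left (by linarith [hs.2]) hB0
        nlinarith [hrpos.le]
      have hinfs : ε/2 ≤ Metric.infDist (x s) RP := by
        have h5 : Metric.infDist (x t₀) RP ≤ Metric.infDist (x s) RP + dist (x t₀) (x s) :=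
          Metric.infDist_le_infDist_add_dist
        rw [dist_eq_norm, norm_sub_rev] at h5
        linarith
      have hsK : x s ∈ K := ⟨hxX s hs0, hinfs⟩
      exact le_trans (hδK _ hsK) (hLyap _ ⟨s, hs0, rfl⟩)
    have h6 : (∫ _ in t₀..(t₀+r), (δ:ℝ)) ≤ ∫ s in t₀..(t₀+r), ψ s :=
      intervalIntegral.integral_mono_on (by linarith) intervalIntegrable_const
        (hψint _ _ ht₀ (by linarith)) hpt
    rwa [intervalIntegral.integral_const, smul_eq_mul, add_sub_cancel_left, mul_comm] at h6
  -- construct the escaping sequence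
  choose T hT1 hT2 using hε'
  obtain ⟨seq, hseq0, hseqS⟩ : ∃ seq : ℕ → ℝ, seq 0 = T 0 ∧ ∀ n, seq (n+1) = T (seq n + r) :=
    ⟨fun n => Nat.rec (T 0) (fun _ p => T (p + r)) n, rfl, fun _ => rfl⟩
  have hseqnn : ∀ n, 0 ≤ seq n := by
    intro n
    cases n with
    | zero => rw [hseq0]; exact (hT1 0).2
    | succ n => rw [hseqS n]; exact (hT1 _).2
  have hseqinf : ∀ n, ε ≤ Metric.infDist (x (seq n)) RP := by
    intro n
    cases n with
    | zero => rw [hseq0]; exact hT2 0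
    | succ n => rw [hseqS n]; exact hT2 _
  have hseqgap : ∀ n, seq n + r ≤ seq (n+1) := by
    intro n
    rw [hseqS n]
    exact (hT1 (seq n + r)).1
  have hGmono : ∀ a b : ℝ, 0 ≤ a → a ≤ b →
      (∫ s in (0:ℝ)..a, ψ s) ≤ ∫ s in (0:ℝ)..b, ψ s := by
    intro a b ha hab
    rw [← intervalIntegral.integral_add_adjacent_intervals
      (hψint 0 a le_rfl ha) (hψint a b ha hab)]
    have h := intervalIntegral.integral_nonneg (μ := MeasureTheory.volume) hab (fun s hs => hψnn s (ha.trans hs.1))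
    linarith
  have hlower : ∀ n : ℕ, ((n:ℝ)+1) * (δ * r) ≤ ∫ s in (0:ℝ)..(seq n + r), ψ s := by
    intro n
    induction n with
    | zero =>
      have h1 := hstep (seq 0) (hseqnn 0) (hseqinf 0)
      have h2 : (∫ s in (0:ℝ)..(seq 0 + r), ψ s)
          = (∫ s in (0:ℝ)..(seq 0), ψ s) + ∫ s in (seq 0)..(seq 0 + r), ψ s :=
        (intervalIntegral.integral_add_adjacent_intervals
          (hψint 0 _ le_rfl (hseqnn 0)) (hψint _ _ (hseqnn 0) (by linarith))).symm
      have h3 : (0:ℝ) ≤ ∫ s in (0:ℝ)..(seq 0), ψ s :=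
        intervalIntegral.integral_nonneg (μ := MeasureTheory.volume) (hseqnn 0) (fun s hs => hψnn s hs.1)
      push_cast
      linarith
    | succ n ih =>
      have h1 := hstep (seq (n+1)) (hseqnn (n+1)) (hseqinf (n+1))
      have h2 : (∫ s in (0:ℝ)..(seq (n+1) + r), ψ s)
          = (∫ s in (0:ℝ)..(seq (n+1)), ψ s) + ∫ s in (seq (n+1))..(seq (n+1) + r), ψ s :=
        (intervalIntegral.integral_add_adjacent_intervals
          (hψint 0 _ le_rfl (hseqnn (n+1))) (hψint _ _ (hseqnn (n+1)) (by linarith))).symm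
      have h4 : (∫ s in (0:ℝ)..(seq n + r), ψ s) ≤ ∫ s in (0:ℝ)..(seq (n+1)), ψ s :=
        hGmono _ _ (by linarith [hseqnn n]) (hseqgap n)
      push_cast
      push_cast at ih
      linarith
  obtain ⟨n, hn⟩ := exists_nat_gt (Cb / (δ * r))
  have h1 := hlower n
  have h2 := hGbd (seq n + r) (by linarith [hseqnn n, hrpos.le])
  have hδr : 0 < δ * r := mul_pos hδpos hrpos
  rw [div_lt_iff₀ hδr] at hn
  nlinarith [hδr.le]
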